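/- The penalty vector ρ is a left eigenvector of the ADMM evolution matrix with eigenvalue 1: ρᵀ·T_A = ρᵀ, where T_A = I−γ(A+B−2BA). -/

import Mathlib

open Matrix BigOperators

noncomputable section

variable {V : Type*} [Fintype V] [DecidableEq V]

/-- The extended index set `Ê = {(e,i) : e ∈ E, i an endpoint of e}`. -/
abbrev Ehat (G : SimpleGraph V) [DecidableRel G.Adj] : Type _ :=
  {p : Sym2 V × V // p.1 ∈ G.edgeSet ∧ p.2 ∈ p.1}

/-- The `|Ê| × |V|` matrix `S`, with `S_{(e,i),j} = 1` iff `j = i`. -/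
def Smat (G : SimpleGraph V) [DecidableRel G.Adj] : Matrix (Ehat G) V ℝ :=
  fun p j => if p.val.2 = j then 1 else 0

/-- The `|Ê| × |Ê|` block-diagonal matrix `Q`, whose block for edge `e = (i,j)` acts on
coordinates `(e,i), (e,j)` as `q_e · [[1,-1],[-1,1]]`. -/
def Qmat (G : SimpleGraph V) [DecidableRel G.Adj] (q : Sym2 V → ℝ) :
    Matrix (Ehat G) (Ehat G) ℝ :=
  fun p p' =>
    if p.val.1 = p'.val.1 then (if p.val.2 = p'.val.2 then q p.val.1 else - q p.val.1) else 0

/-- The element `(e, i)` of `Ê` associated with an edge `e = (i,j)`. -/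
def eFst {G : SimpleGraph V} [DecidableRel G.Adj] {i j : V} (h : G.Adj i j) : Ehat G :=
  ⟨(s(i,j), i), ⟨G.mem_edgeSet.mpr h, Sym2.mem_mk_left i j⟩⟩

/-- The element `(e, j)` of `Ê` associated with an edge `e = (i,j)`. -/
def eSnd {G : SimpleGraph V} [DecidableRel G.Adj] {i j : V} (h : G.Adj i j) : Ehat G :=
  ⟨(s(i,j), j), ⟨G.mem_edgeSet.mpr h, Sym2.mem_mk_right i j⟩⟩

/-- For `(e,i) ∈ Ê` with `e = (i,j)`, the element `(e,j)` given by the other endpoint. -/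
def otherE {G : SimpleGraph V} [DecidableRel G.Adj] (p : Ehat G) : Ehat G :=
  ⟨(p.val.1, Sym2.Mem.other' p.prop.2), ⟨p.prop.1, Sym2.other_mem' p.prop.2⟩⟩


section AuxLemmas

set_option linter.unusedSectionVars false

variable {G : SimpleGraph V} [DecidableRel G.Adj]

lemma otherE_snd_ne (p : Ehat G) : (otherE p).val.2 ≠ p.val.2 := by
  have hd : ¬ p.val.1.IsDiag := G.not_isDiag_of_mem_edgeSet p.prop.1
  have := Sym2.other_ne hd p.prop.2
  rwa [Sym2.other_eq_other' p.prop.2] at this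

lemma otherE_ne (p : Ehat G) : otherE p ≠ p := fun h => otherE_snd_ne p (by rw [h])

lemma otherE_otherE (p : Ehat G) : otherE (otherE p) = p :=
  Subtype.ext (Prod.ext rfl (Sym2.other_invol' p.prop.2 _))

lemma eq_or_eq_otherE {p p' : Ehat G} (h : p.val.1 = p'.val.1) : p = p' ∨ p = otherE p' := by
  have hm : p.val.2 ∈ p'.val.1 := h ▸ p.prop.2
  rw [← Sym2.other_spec' p'.prop.2, Sym2.mem_iff] at hm
  rcases hm with h2 | h2
  · left; exact Subtype.ext (Prod.ext h h2)
  · right; exact Subtype.ext (Prod.ext h h2)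

lemma sum_eq_pair (p' : Ehat G) (f : Ehat G → ℝ)
    (hf : ∀ p : Ehat G, p.val.1 ≠ p'.val.1 → f p = 0) :
    ∑ p, f p = f p' + f (otherE p') := by
  rw [← Finset.sum_pair (Ne.symm (otherE_ne p'))]
  refine (Finset.sum_subset (Finset.subset_univ _) ?_).symm
  intro x _ hx
  simp only [Finset.mem_insert, Finset.mem_singleton, not_or] at hx
  refine hf x fun h1 => ?_
  rcases eq_or_eq_otherE h1 with h | h
  · exact hx.1 h
  · exact hx.2 h

lemma Q_self (q : Sym2 V → ℝ) (p : Ehat G) : Qmat G q p p = q p.val.1 := by simp [Qmat]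

lemma Q_otherE_left (q : Sym2 V → ℝ) (p : Ehat G) :
    Qmat G q (otherE p) p = - q p.val.1 := by
  simp only [Qmat]
  rw [if_pos (show (otherE p).val.1 = p.val.1 from rfl), if_neg (otherE_snd_ne p)]
  rfl

lemma Q_otherE_right (q : Sym2 V → ℝ) (p : Ehat G) :
    Qmat G q p (otherE p) = - q p.val.1 := by
  simp only [Qmat]
  rw [if_pos (show p.val.1 = (otherE p).val.1 from rfl), if_neg (Ne.symm (otherE_snd_ne p))]

lemma colsum_Q (q : Sym2 V → ℝ) (p' : Ehat G) : ∑ p, Qmat G q p p' = 0 := by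
  rw [sum_eq_pair p' (fun p => Qmat G q p p') (fun p h => by simp [Qmat, h])]
  rw [Q_self, Q_otherE_left]
  ring

lemma mulVec_Q (q : Sym2 V → ℝ) (x : Ehat G → ℝ) (p : Ehat G) :
    (Qmat G q *ᵥ x) p = q p.val.1 * x p - q p.val.1 * x (otherE p) := by
  show ∑ p', Qmat G q p p' * x p' = _
  rw [sum_eq_pair p (fun p' => Qmat G q p p' * x p')
    (fun p'' h => by simp [Qmat, Ne.symm h])]
  rw [Q_self, Q_otherE_right]
  ring

lemma quad_nonneg (q : Sym2 V → ℝ) (hq : ∀ e ∈ G.edgeSet, 0 < q e) (x : Ehat G → ℝ) :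
    0 ≤ x ⬝ᵥ (Qmat G q *ᵥ x) := by
  have hinv : Function.Involutive (otherE (G := G)) := otherE_otherE
  have hsum : ∑ p, x p * (Qmat G q *ᵥ x) p
      = ∑ p, x (otherE p) * (Qmat G q *ᵥ x) (otherE p) :=
    (Equiv.sum_comp hinv.toPerm (fun p => x p * (Qmat G q *ᵥ x) p)).symm
  have key : (2:ℝ) * (x ⬝ᵥ (Qmat G q *ᵥ x)) = ∑ p, q p.val.1 * (x p - x (otherE p))^2 := by
    rw [dotProduct, two_mul]
    nth_rewrite 2 [hsum]
    rw [← Finset.sum_add_distrib]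
    refine Finset.sum_congr rfl fun p _ => ?_
    rw [mulVec_Q, mulVec_Q, otherE_otherE]
    have hqe : q (otherE p).val.1 = q p.val.1 := rfl
    rw [hqe]; ring
  have hnn : 0 ≤ ∑ p, q p.val.1 * (x p - x (otherE p))^2 :=
    Finset.sum_nonneg fun p _ => mul_nonneg (le_of_lt (hq _ p.prop.1)) (sq_nonneg _)
  linarith [key ▸ hnn]

lemma herm_Q (q : Sym2 V → ℝ) : (Qmat G q).IsHermitian := by
  refine Matrix.IsHermitian.ext fun p p' => ?_
  rw [star_trivial]
  simp only [Qmat]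
  rcases eq_or_ne p.val.1 p'.val.1 with h | h
  · rcases eq_or_ne p.val.2 p'.val.2 with h2 | h2
    · rw [if_pos h.symm, if_pos h2.symm, if_pos h, if_pos h2, h]
    · rw [if_pos h.symm, if_neg (Ne.symm h2), if_pos h, if_neg h2, h]
  · rw [if_neg (Ne.symm h), if_neg h]

lemma posdef_DQ (q : Sym2 V → ℝ) (hq : ∀ e ∈ G.edgeSet, 0 < q e)
    (ρ : Ehat G → ℝ) (hρ : ∀ p, 0 < ρ p) :
    (Matrix.diagonal ρ + Qmat G q).PosDef := by
  rw [Matrix.posDef_iff_dotProduct_mulVec]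
  constructor
  · exact (Matrix.isHermitian_diagonal ρ).add (herm_Q q)
  · intro x hx
    obtain ⟨p0, hp0⟩ := Function.ne_iff.mp hx
    have hd : 0 < x ⬝ᵥ (Matrix.diagonal ρ *ᵥ x) := by
      rw [dotProduct]
      refine Finset.sum_pos' (fun p _ => ?_) ⟨p0, Finset.mem_univ _, ?_⟩
      · rw [Matrix.mulVec_diagonal]
        have : x p * (ρ p * x p) = ρ p * x p ^ 2 := by ring
        rw [this]
        exact mul_nonneg (hρ p).le (sq_nonneg _)
      · rw [Matrix.mulVec_diagonal]
        have : x p0 * (ρ p0 * x p0) = ρ p0 * x p0 ^ 2 := by ring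
        rw [this]
        exact mul_pos (hρ p0) (sq_pos_of_ne_zero hp0)
    have hQ := quad_nonneg q hq x
    have hsplit : star x ⬝ᵥ ((Matrix.diagonal ρ + Qmat G q) *ᵥ x)
        = x ⬝ᵥ (Matrix.diagonal ρ *ᵥ x) + x ⬝ᵥ (Qmat G q *ᵥ x) := by
      rw [star_trivial, Matrix.add_mulVec, dotProduct_add]
    rw [hsplit]
    linarith

lemma vecMul_smulMat (v : Ehat G → ℝ) (c : ℝ) (M : Matrix (Ehat G) (Ehat G) ℝ) :
    v ᵥ* (c • M) = c • (v ᵥ* M) := by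
  funext j
  show ∑ i, v i * (c • M) i j = c * ∑ i, v i * M i j
  rw [Finset.mul_sum]
  exact Finset.sum_congr rfl fun i _ => by simp [Matrix.smul_apply]; ring

end AuxLemmas

/-- **`ρ` is a left eigenvector of `T_A` with eigenvalue 1**: `ρᵀ T_A = ρᵀ`. -/
theorem rho_left_eigenvector_TA
    (G : SimpleGraph V) [DecidableRel G.Adj]
    (hG : ∀ v : V, ∃ w, G.Adj v w)
    (q : Sym2 V → ℝ) (hq : ∀ e ∈ G.edgeSet, 0 < q e)
    (ρ : Ehat G → ℝ) (hρ : ∀ p, 0 < ρ p)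
    (γ : ℝ) (hγ : γ ∈ Set.Ioo (0 : ℝ) 2) :
    let S := Smat G
    let Q := Qmat G q
    let Dρ := Matrix.diagonal ρ
    let A := (1 + Dρ⁻¹ * Q)⁻¹
    let B := S * (Sᵀ * Dρ * S)⁻¹ * Sᵀ * Dρ
    let TA := 1 - γ • (A + B - (2 : ℝ) • (B * A))
    Matrix.vecMul ρ TA = ρ := by
  intro S Q Dρ A B TA
  -- the vertex degree-weight vector
  set d : V → ℝ := fun j => ∑ p : Ehat G, ρ p * Smat G p j with hd
  have hd_pos : ∀ j, 0 < d j := by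
    intro j
    obtain ⟨w, hw⟩ := hG j
    refine Finset.sum_pos' (fun p _ => ?_) ⟨eFst hw, Finset.mem_univ _, ?_⟩
    · simp only [Smat]; split_ifs <;> simp [(hρ p).le]
    · simp only [Smat]
      rw [if_pos (show (eFst hw).val.2 = j from rfl)]
      simpa using hρ _
  have hN : (Smat G)ᵀ * Matrix.diagonal ρ * Smat G = Matrix.diagonal d := by
    ext j k
    rw [Matrix.mul_apply]
    simp only [Matrix.mul_diagonal, Matrix.transpose_apply]
    rcases eq_or_ne j k with rfl | hjk
    · rw [Matrix.diagonal_apply_eq, hd]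
      refine Finset.sum_congr rfl fun p _ => ?_
      simp only [Smat]; split_ifs <;> ring
    · rw [Matrix.diagonal_apply_ne _ hjk]
      refine Finset.sum_eq_zero fun p _ => ?_
      simp only [Smat]
      split_ifs with h1 h2
      · exact absurd (h1.symm.trans h2) hjk
      all_goals ring
  have hNinv : (Matrix.diagonal d)⁻¹ = Matrix.diagonal (fun j => (d j)⁻¹) :=
    Matrix.inv_eq_right_inv (by
      rw [Matrix.diagonal_mul_diagonal,
        show (fun j => d j * (d j)⁻¹) = fun _ => (1:ℝ) from
          funext fun j => mul_inv_cancel₀ (hd_pos j).ne', Matrix.diagonal_one])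
  have hρS : Matrix.vecMul ρ (Smat G) = d := rfl
  have hB : Matrix.vecMul ρ B = ρ := by
    show Matrix.vecMul ρ (Smat G * ((Smat G)ᵀ * Matrix.diagonal ρ * Smat G)⁻¹ * (Smat G)ᵀ
      * Matrix.diagonal ρ) = ρ
    rw [hN, hNinv, ← Matrix.vecMul_vecMul, ← Matrix.vecMul_vecMul, ← Matrix.vecMul_vecMul, hρS]
    have h2 : Matrix.vecMul d (Matrix.diagonal fun j => (d j)⁻¹) = fun _ => (1:ℝ) := by
      funext j; rw [Matrix.vecMul_diagonal]; exact mul_inv_cancel₀ (hd_pos j).ne'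
    rw [h2]
    have h3 : Matrix.vecMul (fun _ => (1:ℝ)) (Smat G)ᵀ = fun _ => (1:ℝ) := by
      funext p
      show ∑ j, (1:ℝ) * (Smat G)ᵀ j p = 1
      simp [Smat, Matrix.transpose_apply]
    rw [h3]
    funext p
    rw [Matrix.vecMul_diagonal, one_mul]
  -- the A-side
  have hDinv : (Matrix.diagonal ρ)⁻¹ = Matrix.diagonal (fun p => (ρ p)⁻¹) :=
    Matrix.inv_eq_right_inv (by
      rw [Matrix.diagonal_mul_diagonal,
        show (fun p => ρ p * (ρ p)⁻¹) = fun _ => (1:ℝ) from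
          funext fun p => mul_inv_cancel₀ (hρ p).ne', Matrix.diagonal_one])
  have hfact : (1 + (Matrix.diagonal ρ)⁻¹ * Qmat G q)
      = (Matrix.diagonal ρ)⁻¹ * (Matrix.diagonal ρ + Qmat G q) := by
    rw [mul_add, hDinv, Matrix.diagonal_mul_diagonal,
      show (fun p => (ρ p)⁻¹ * ρ p) = fun _ => (1:ℝ) from
        funext fun p => inv_mul_cancel₀ (hρ p).ne', Matrix.diagonal_one]
  have hdet : IsUnit (1 + (Matrix.diagonal ρ)⁻¹ * Qmat G q).det := by
    rw [hfact, Matrix.det_mul, hDinv, Matrix.det_diagonal]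
    exact IsUnit.mul
      (isUnit_iff_ne_zero.mpr (Finset.prod_ne_zero_iff.mpr
        fun p _ => inv_ne_zero (hρ p).ne'))
      (isUnit_iff_ne_zero.mpr (posdef_DQ q hq ρ hρ).det_pos.ne')
  have hM1 : Matrix.vecMul ρ (1 + (Matrix.diagonal ρ)⁻¹ * Qmat G q) = ρ := by
    rw [Matrix.vecMul_add, Matrix.vecMul_one, ← Matrix.vecMul_vecMul, hDinv]
    have h1 : Matrix.vecMul ρ (Matrix.diagonal fun p => (ρ p)⁻¹) = fun _ => (1:ℝ) := by
      funext p; rw [Matrix.vecMul_diagonal]; exact mul_inv_cancel₀ (hρ p).ne'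
    rw [h1]
    have h2 : Matrix.vecMul (fun _ => (1:ℝ)) (Qmat G q) = 0 := by
      funext p'
      show ∑ p, (1:ℝ) * Qmat G q p p' = 0
      simp only [one_mul]
      exact colsum_Q q p'
    rw [h2, add_zero]
  have hA : Matrix.vecMul ρ A = ρ := by
    show Matrix.vecMul ρ (1 + (Matrix.diagonal ρ)⁻¹ * Qmat G q)⁻¹ = ρ
    have hstep : Matrix.vecMul (Matrix.vecMul ρ (1 + (Matrix.diagonal ρ)⁻¹ * Qmat G q))
        (1 + (Matrix.diagonal ρ)⁻¹ * Qmat G q)⁻¹ = ρ := by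
      rw [Matrix.vecMul_vecMul, Matrix.mul_nonsing_inv _ hdet, Matrix.vecMul_one]
    rw [hM1] at hstep
    exact hstep
  have hBA : Matrix.vecMul ρ (B * A) = ρ := by
    rw [← Matrix.vecMul_vecMul, hB, hA]
  show Matrix.vecMul ρ (1 - γ • (A + B - (2:ℝ) • (B * A))) = ρ
  rw [Matrix.vecMul_sub, Matrix.vecMul_one, vecMul_smulMat, Matrix.vecMul_sub,
    Matrix.vecMul_add, vecMul_smulMat, hA, hB, hBA]
  have hz : ρ + ρ - (2:ℝ) • ρ = 0 := by
    funext p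
    simp only [Pi.sub_apply, Pi.add_apply, Pi.smul_apply, smul_eq_mul, Pi.zero_apply]
    ring
  rw [hz, smul_zero, sub_zero]
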